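/- Calibration with noise exponent: suppose for all t > 0, μ{(x,x'): |η₊ - η₋| ≤ t} ≤ C* t^q with C* > 0 and q > 0, and suppose (η₊ - η₋)² ≤ C_ψ · g pointwise on a measurable set A (where g ≥ 0). Then ∫_A |η₊ - η₋| dμ ≤ c · (∫_A g dμ)^{(q+1)/(q+2)} where c = (q+1)^{-(q+1)/(q+2)} C*^{1/(q+2)} C_ψ^{(q+1)/(q+2)} + (q+1)^{1/(q+2)} C*^{1/(q+2)} C_ψ^{(q+1)/(q+2)}. -/

import Mathlib

open MeasureTheory

theorem calibration_with_noise_exponent {α : Type*} [MeasurableSpace α]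
    (μ : Measure α) [IsProbabilityMeasure μ]
    (ηp ηm : α → ℝ) (hηp : Measurable ηp) (hηm : Measurable ηm)
    (hp : ∀ z, ηp z ∈ Set.Icc (0 : ℝ) 1) (hm : ∀ z, ηm z ∈ Set.Icc (0 : ℝ) 1)
    (g : α → ℝ) (hg : Integrable g μ) (hg0 : ∀ z, 0 ≤ g z)
    (A : Set α) (hA : MeasurableSet A)
    (Cs q Cψ : ℝ) (hCs : 0 < Cs) (hq : 0 < q) (hCψ : 0 < Cψ)
    (hnoise : ∀ t > 0, μ {z | |ηp z - ηm z| ≤ t} ≤ ENNReal.ofReal (Cs * t ^ q))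
    (hcal : ∀ z ∈ A, (ηp z - ηm z) ^ 2 ≤ Cψ * g z) :
    ∫ z in A, |ηp z - ηm z| ∂μ ≤
      ((q + 1) ^ (-(q + 1) / (q + 2)) * Cs ^ ((1 : ℝ) / (q + 2)) * Cψ ^ ((q + 1) / (q + 2))
        + (q + 1) ^ ((1 : ℝ) / (q + 2)) * Cs ^ ((1 : ℝ) / (q + 2)) * Cψ ^ ((q + 1) / (q + 2)))
        * (∫ z in A, g z ∂μ) ^ ((q + 1) / (q + 2)) := by
  have hq2 : (0 : ℝ) < q + 2 := by linarith
  have hq1 : (0 : ℝ) < q + 1 := by linarith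
  set h : α → ℝ := fun z => |ηp z - ηm z| with hh
  have hhm : Measurable h := (hηp.sub hηm).abs
  have hhnn : ∀ z, 0 ≤ h z := fun z => abs_nonneg _
  have hh1 : ∀ z, h z ≤ 1 := by
    intro z
    have h1 := hp z; have h2 := hm z
    simp only [Set.mem_Icc] at h1 h2
    rw [hh]; rw [abs_le]; constructor <;> [skip; skip] <;> linarith [h1.1, h1.2, h2.1, h2.2]
  have hhint : Integrable h μ := by
    refine (integrable_const (1 : ℝ)).mono' hhm.aestronglyMeasurable ?_
    exact ae_of_all _ fun z => by
      simp only [Real.norm_eq_abs, abs_of_nonneg (hhnn z)]; exact hh1 z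
  set G : ℝ := ∫ z in A, g z ∂μ with hG
  have hGnn : 0 ≤ G := setIntegral_nonneg hA fun z _ => hg0 z
  -- core bound for every t > 0
  have key : ∀ t : ℝ, 0 < t → ∫ z in A, h z ∂μ ≤ Cs * t ^ (q + 1) + Cψ * G / t := by
    intro t ht
    set S : Set α := {z | h z ≤ t} with hS
    have hSm : MeasurableSet S := hhm measurableSet_Iic
    have hsplit : ∫ z in A, h z ∂μ =
        (∫ z in A ∩ S, h z ∂μ) + ∫ z in A \ S, h z ∂μ := by
      rw [← setIntegral_union (Set.disjoint_sdiff_right.mono_left Set.inter_subset_right)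
          (hA.diff hSm) hhint.integrableOn hhint.integrableOn, Set.inter_union_diff]
    have hb1 : ∫ z in A ∩ S, h z ∂μ ≤ Cs * t ^ (q + 1) := by
      have h1 : ∫ z in A ∩ S, h z ∂μ ≤ ∫ _ in A ∩ S, t ∂μ := by
        refine setIntegral_mono_on hhint.integrableOn (integrableOn_const ?_)
          (hA.inter hSm) fun z hz => hz.2
        exact (measure_lt_top μ _).ne
      have h2 : ∫ _ in A ∩ S, t ∂μ = (μ (A ∩ S)).toReal * t := by
        rw [setIntegral_const, smul_eq_mul]; rfl
      have h3 : (μ (A ∩ S)).toReal ≤ Cs * t ^ q := by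
        have := (measure_mono (Set.inter_subset_right : A ∩ S ⊆ S)).trans (hnoise t ht)
        calc (μ (A ∩ S)).toReal ≤ (ENNReal.ofReal (Cs * t ^ q)).toReal :=
              ENNReal.toReal_mono ENNReal.ofReal_ne_top this
          _ ≤ Cs * t ^ q := le_of_eq (ENNReal.toReal_ofReal (by positivity))
      calc ∫ z in A ∩ S, h z ∂μ ≤ (μ (A ∩ S)).toReal * t := h1.trans_eq h2
        _ ≤ (Cs * t ^ q) * t := by
            exact mul_le_mul_of_nonneg_right h3 ht.le
        _ = Cs * t ^ (q + 1) := by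
            rw [Real.rpow_add ht, Real.rpow_one]; ring
    have hb2 : ∫ z in A \ S, h z ∂μ ≤ Cψ * G / t := by
      have h1 : ∫ z in A \ S, h z ∂μ ≤ ∫ z in A \ S, Cψ / t * g z ∂μ := by
        refine setIntegral_mono_on hhint.integrableOn ((hg.const_mul _).integrableOn)
          (hA.diff hSm) fun z hz => ?_
        have hzA : z ∈ A := hz.1
        have hzt : t < h z := lt_of_not_ge hz.2
        have hsq : h z ^ 2 ≤ Cψ * g z := by
          rw [hh]; rw [sq_abs]; exact hcal z hzA
        have : h z * t ≤ Cψ * g z := by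
          calc h z * t ≤ h z * h z := mul_le_mul_of_nonneg_left hzt.le (hhnn z)
            _ = h z ^ 2 := (sq (h z)).symm
            _ ≤ Cψ * g z := hsq
        rw [div_mul_eq_mul_div, le_div_iff₀ ht]
        linarith [this]
      have h2 : ∫ z in A \ S, Cψ / t * g z ∂μ = Cψ / t * ∫ z in A \ S, g z ∂μ := by
        rw [integral_const_mul]
      have h3 : ∫ z in A \ S, g z ∂μ ≤ G := by
        refine setIntegral_mono_set hg.integrableOn (ae_of_all _ fun z => hg0 z)
          (HasSubset.Subset.eventuallyLE Set.diff_subset)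
      calc ∫ z in A \ S, h z ∂μ ≤ Cψ / t * ∫ z in A \ S, g z ∂μ := h1.trans_eq h2
        _ ≤ Cψ / t * G := by
            exact mul_le_mul_of_nonneg_left h3 (div_nonneg hCψ.le ht.le)
        _ = Cψ * G / t := by ring
    rw [hsplit]; exact add_le_add hb1 hb2
  -- case G = 0
  rcases eq_or_lt_of_le hGnn with hG0 | hGpos
  · have hgz : (fun z => g z) =ᵐ[μ.restrict A] 0 := by
      have := (integral_eq_zero_iff_of_nonneg (fun z => hg0 z) hg.restrict).1 hG0.symm
      exact this
    have hhz : h =ᵐ[μ.restrict A] 0 := by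
      filter_upwards [hgz, ae_restrict_mem hA] with z hz1 hz2
      have := hcal z hz2
      rw [Pi.zero_apply] at hz1 ⊢
      rw [hz1, mul_zero] at this
      have : (ηp z - ηm z) = 0 := by nlinarith [sq_nonneg (ηp z - ηm z)]
      simp [hh, this]
    rw [integral_congr_ae hhz]
    simp only [Pi.zero_apply, integral_zero]
    rw [← hG0, Real.zero_rpow (by positivity : ((q+1)/(q+2) : ℝ) ≠ 0), mul_zero]
  -- case G > 0 : optimize over t
  · set e1 : ℝ := 1 / (q + 2) with he1
    set e2 : ℝ := (q + 1) / (q + 2) with he2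
    set B : ℝ := Cψ * G / ((q + 1) * Cs) with hB
    have hBpos : 0 < B := by positivity
    set t : ℝ := B ^ e1 with hT
    have htpos : 0 < t := Real.rpow_pos_of_pos hBpos _
    have hkey := key t htpos
    have hterm1 : Cs * t ^ (q + 1) =
        (q + 1) ^ (-(q + 1) / (q + 2)) * Cs ^ ((1 : ℝ) / (q + 2)) * Cψ ^ e2 * G ^ e2 := by
      have hL : 0 < Cs * t ^ (q + 1) := by positivity
      have hR : 0 < (q + 1) ^ (-(q + 1) / (q + 2)) * Cs ^ ((1 : ℝ) / (q + 2)) * Cψ ^ e2 * G ^ e2 := by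
        positivity
      rw [← Real.log_injOn_pos.eq_iff (Set.mem_Ioi.2 hL) (Set.mem_Ioi.2 hR)]
      rw [Real.log_mul hCs.ne' (by positivity), Real.log_rpow htpos, hT,
        Real.log_rpow hBpos, hB, Real.log_div (by positivity) (by positivity),
        Real.log_mul hCψ.ne' hGpos.ne', Real.log_mul hq1.ne' hCs.ne',
        Real.log_mul (by positivity) (by positivity),
        Real.log_mul (by positivity) (by positivity),
        Real.log_mul (by positivity) (by positivity),
        Real.log_rpow hq1, Real.log_rpow hCs, Real.log_rpow hCψ, Real.log_rpow hGpos,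
        he1, he2]
      field_simp
      ring
    have hterm2 : Cψ * G / t =
        (q + 1) ^ ((1 : ℝ) / (q + 2)) * Cs ^ ((1 : ℝ) / (q + 2)) * Cψ ^ e2 * G ^ e2 := by
      have hL : 0 < Cψ * G / t := by positivity
      have hR : 0 < (q + 1) ^ ((1 : ℝ) / (q + 2)) * Cs ^ ((1 : ℝ) / (q + 2)) * Cψ ^ e2 * G ^ e2 := by
        positivity
      rw [← Real.log_injOn_pos.eq_iff (Set.mem_Ioi.2 hL) (Set.mem_Ioi.2 hR)]
      rw [Real.log_div (by positivity) htpos.ne', Real.log_mul hCψ.ne' hGpos.ne', hT,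
        Real.log_rpow hBpos, hB, Real.log_div (by positivity) (by positivity),
        Real.log_mul hCψ.ne' hGpos.ne', Real.log_mul hq1.ne' hCs.ne',
        Real.log_mul (by positivity) (by positivity),
        Real.log_mul (by positivity) (by positivity),
        Real.log_mul (by positivity) (by positivity),
        Real.log_rpow hq1, Real.log_rpow hCs, Real.log_rpow hCψ, Real.log_rpow hGpos,
        he1, he2]
      field_simp
      ring
    calc ∫ z in A, h z ∂μ ≤ Cs * t ^ (q + 1) + Cψ * G / t := hkey
      _ = ((q + 1) ^ (-(q + 1) / (q + 2)) * Cs ^ ((1 : ℝ) / (q + 2)) * Cψ ^ e2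
            + (q + 1) ^ ((1 : ℝ) / (q + 2)) * Cs ^ ((1 : ℝ) / (q + 2)) * Cψ ^ e2) * G ^ e2 := by
          rw [hterm1, hterm2]; ring
      _ = _ := by rw [he2, hG]
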